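/- Fix parameters P, σ₀², λ₀, λ₂ > 0 and δ ∈ (0,1), define ψ(R) = (P λ₂ e^{−λ₀ σ₀² (2^R−1)/P})/(λ₀ (2^R−1)(1−δ)) − (λ₂ P)/(λ₀ (2^R−1)) for R > 0 and R₀ = log₂(1 + (−P ln(1−δ))/(λ₀ σ₀²)). Let Q_max > 0, let a ∈ (0, R₀] be the unique rate with ψ(a) = Q_max, and let R* > 0 be any real with R* ≥ a. Then ψ( max(min(R₀, R*), a) ) = min( max(0, ψ(R*)), Q_max ). -/

import Mathlib

open Real

private lemma hmono_aux (k u s t : ℝ) (hk : 0 < k) (hu : Real.exp (k*t) ≤ u)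
    (hs : 0 < s) (hst : s ≤ t) :
    (u * Real.exp (-(k*t)) - 1)/t ≤ (u * Real.exp (-(k*s)) - 1)/s := by
  have ht : 0 < t := hs.trans_le hst
  rw [div_le_div_iff₀ ht hs, Real.exp_neg, Real.exp_neg]
  have hA : 0 < Real.exp (k*s) := Real.exp_pos _
  have hB : 0 < Real.exp (k*t) := Real.exp_pos _
  have hAB : Real.exp (k*s) ≤ Real.exp (k*t) :=
    Real.exp_le_exp.mpr (by nlinarith)
  set A := Real.exp (k*s)
  set B := Real.exp (k*t)
  rw [← mul_le_mul_iff_of_pos_right (show (0:ℝ) < A*B by positivity)]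
  have h1 : (u * B⁻¹ - 1) * s * (A*B) = (u*A*s - s*A*B) := by field_simp
  have h2 : (u * A⁻¹ - 1) * t * (A*B) = (u*B*t - t*A*B) := by field_simp
  rw [h1, h2]
  nlinarith [mul_nonneg (sub_nonneg.mpr hAB) ht.le,
    mul_nonneg (sub_nonneg.mpr hu) (by nlinarith : (0:ℝ) ≤ B*t - A*s),
    mul_pos hA hB]

theorem stmt_13 (P σ₀sq lam₀ lam₂ δ : ℝ)
    (hP : 0 < P) (hσ : 0 < σ₀sq) (hlam₀ : 0 < lam₀) (hlam₂ : 0 < lam₂)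
    (hδ : δ ∈ Set.Ioo (0 : ℝ) 1)
    (ψ : ℝ → ℝ)
    (hψ : ∀ R : ℝ, ψ R = P * lam₂ * Real.exp (-lam₀ * σ₀sq * ((2 : ℝ) ^ R - 1) / P) /
          (lam₀ * ((2 : ℝ) ^ R - 1) * (1 - δ)) - lam₂ * P / (lam₀ * ((2 : ℝ) ^ R - 1)))
    (R₀ : ℝ) (hR₀ : R₀ = Real.logb 2 (1 + (-P * Real.log (1 - δ)) / (lam₀ * σ₀sq)))
    (Qmax : ℝ) (hQmax : 0 < Qmax)
    (a : ℝ) (ha : a ∈ Set.Ioc 0 R₀) (haQ : ψ a = Qmax)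
    (Rs : ℝ) (hRs : 0 < Rs) (hRsa : a ≤ Rs) :
    ψ (max (min R₀ Rs) a) = min (max 0 (ψ Rs)) Qmax := by
  obtain ⟨hδ0, hδ1⟩ := hδ
  have h1δ : 0 < 1 - δ := by linarith
  set k : ℝ := lam₀ * σ₀sq / P with hk_def
  set c : ℝ := P * lam₂ / lam₀ with hc_def
  set u : ℝ := 1 / (1 - δ) with hu_def
  have hk : 0 < k := by positivity
  have hc : 0 < c := by positivity
  have hu1 : 1 < u := by rw [hu_def]; rw [lt_div_iff₀ h1δ]; linarith
  -- rewrite ψ in a convenient form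
  have ht_pos : ∀ R : ℝ, 0 < R → 0 < (2:ℝ)^R - 1 := by
    intro R hR
    have : (1:ℝ) < (2:ℝ)^R :=
      Real.one_lt_rpow_iff_of_pos (by norm_num) |>.mpr (Or.inl ⟨by norm_num, hR⟩)
    linarith
  have hψ' : ∀ R : ℝ, 0 < R →
      ψ R = c * ((u * Real.exp (-(k * ((2:ℝ)^R - 1))) - 1) / ((2:ℝ)^R - 1)) := by
    intro R hR
    have ht := ht_pos R hR
    rw [hψ R]
    have hexp : -lam₀ * σ₀sq * ((2:ℝ)^R - 1) / P = -(k * ((2:ℝ)^R - 1)) := by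
      rw [hk_def]; field_simp
    rw [hexp, hc_def, hu_def]
    field_simp
  -- R₀ facts
  have hlog : Real.log (1 - δ) < 0 := Real.log_neg h1δ (by linarith)
  have ht₀pos : 0 < -P * Real.log (1 - δ) / (lam₀ * σ₀sq) := by
    apply div_pos (by nlinarith) (by positivity)
  set t₀ : ℝ := -P * Real.log (1 - δ) / (lam₀ * σ₀sq) with ht₀_def
  have h2R₀ : (2:ℝ)^R₀ - 1 = t₀ := by
    rw [hR₀, Real.rpow_logb (by norm_num) (by norm_num) (by linarith)]
    ring
  have hR₀pos : 0 < R₀ := lt_of_lt_of_le ha.1 ha.2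
  have hkt₀ : k * t₀ = -Real.log (1 - δ) := by
    rw [hk_def, ht₀_def]; field_simp
  have hexpkt₀ : Real.exp (k * t₀) = u := by
    rw [hkt₀, hu_def, Real.exp_neg, Real.exp_log h1δ, inv_eq_one_div]
  -- ψ R₀ = 0
  have hψR₀ : ψ R₀ = 0 := by
    rw [hψ' R₀ hR₀pos, h2R₀]
    have : Real.exp (-(k * t₀)) = 1 - δ := by
      rw [Real.exp_neg, hexpkt₀, hu_def]; field_simp
    rw [this, hu_def]
    field_simp
    ring
  -- comparison of 2^R
  have ht_mono : ∀ R S : ℝ, R ≤ S → (2:ℝ)^R - 1 ≤ (2:ℝ)^S - 1 := by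
    intro R S hRS
    have := Real.rpow_le_rpow_left_iff (x := (2:ℝ)) (by norm_num : (1:ℝ) < 2) (y := R) (z := S)
    linarith [this.mpr hRS]
  -- sign: R ≤ R₀, R > 0 ⇒ ψ R ≥ 0
  have hsign_pos : ∀ R : ℝ, 0 < R → R ≤ R₀ → 0 ≤ ψ R := by
    intro R hR hRR₀
    rw [hψ' R hR]
    have ht := ht_pos R hR
    have h1 : k * ((2:ℝ)^R - 1) ≤ k * t₀ := by
      rw [← h2R₀]
      exact mul_le_mul_of_nonneg_left (ht_mono R R₀ hRR₀) hk.le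
    have h2 : Real.exp (-(k * t₀)) ≤ Real.exp (-(k * ((2:ℝ)^R - 1))) :=
      Real.exp_le_exp.mpr (by linarith)
    have h3 : Real.exp (-(k * t₀)) = 1 - δ := by
      rw [Real.exp_neg, hexpkt₀, hu_def]; field_simp
    have h4 : 1 ≤ u * Real.exp (-(k * ((2:ℝ)^R - 1))) := by
      rw [hu_def]
      rw [div_mul_eq_mul_div, le_div_iff₀ h1δ]
      linarith
    exact mul_nonneg hc.le (div_nonneg (by linarith) ht.le)
  -- sign: R ≥ R₀ ⇒ ψ R ≤ 0
  have hsign_neg : ∀ R : ℝ, 0 < R → R₀ ≤ R → ψ R ≤ 0 := by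
    intro R hR hRR₀
    rw [hψ' R hR]
    have ht := ht_pos R hR
    have h1 : k * t₀ ≤ k * ((2:ℝ)^R - 1) := by
      rw [← h2R₀]
      exact mul_le_mul_of_nonneg_left (ht_mono R₀ R hRR₀) hk.le
    have h2 : Real.exp (-(k * ((2:ℝ)^R - 1))) ≤ Real.exp (-(k * t₀)) :=
      Real.exp_le_exp.mpr (by linarith)
    have h3 : Real.exp (-(k * t₀)) = 1 - δ := by
      rw [Real.exp_neg, hexpkt₀, hu_def]; field_simp
    have h4 : u * Real.exp (-(k * ((2:ℝ)^R - 1))) ≤ 1 := by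
      rw [hu_def, div_mul_eq_mul_div, div_le_one h1δ]
      linarith
    have h5 : (u * Real.exp (-(k * ((2:ℝ)^R - 1))) - 1) / ((2:ℝ)^R - 1) ≤ 0 :=
      div_nonpos_of_nonpos_of_nonneg (by linarith) ht.le
    exact mul_nonpos_of_nonneg_of_nonpos hc.le h5
  -- monotonicity: 0 < S ≤ T ≤ R₀ ⇒ ψ T ≤ ψ S
  have hmono : ∀ S T : ℝ, 0 < S → S ≤ T → T ≤ R₀ → ψ T ≤ ψ S := by
    intro S T hS hST hTR₀
    have hT : 0 < T := hS.trans_le hST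
    rw [hψ' S hS, hψ' T hT]
    apply mul_le_mul_of_nonneg_left _ hc.le
    apply hmono_aux k u _ _ hk _ (ht_pos S hS) (ht_mono S T hST)
    rw [← hexpkt₀]
    apply Real.exp_le_exp.mpr
    rw [← h2R₀]
    exact mul_le_mul_of_nonneg_left (ht_mono T R₀ hTR₀) hk.le
  -- case split
  rcases le_or_gt Rs R₀ with hcase | hcase
  · rw [min_eq_right hcase, max_eq_left hRsa]
    have h0 : 0 ≤ ψ Rs := hsign_pos Rs hRs hcase
    have hQ : ψ Rs ≤ Qmax := haQ ▸ hmono a Rs ha.1 hRsa hcase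
    rw [max_eq_right h0, min_eq_left hQ]
  · rw [min_eq_left hcase.le, max_eq_left ha.2, hψR₀]
    have h0 : ψ Rs ≤ 0 := hsign_neg Rs hRs hcase.le
    rw [max_eq_left h0, min_eq_left hQmax.le]
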